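/- If w is equidistant in angle to the two attributes (α = θ/2, both sides), then MAC = 1 − cos(θ/2); in particular for θ ≠ π the MAC score differs from 1 even though the word is unbiased (equally similar to both attributes). -/
import Mathlib

/-- If the word is equidistant in angle to the two attributes (α = θ/2), then
MAC = 1 − cos(θ/2), which differs from 1 whenever θ ∈ (0, π). -/
theorem mac_equidistant (θ : ℝ) (hθ : θ ∈ Set.Ioo 0 Real.pi) :
    (1 / 2 : ℝ) * ((1 - Real.cos (θ / 2)) + (1 - Real.cos (θ - θ / 2)))
        = 1 - Real.cos (θ / 2) ∧
      1 - Real.cos (θ / 2) ≠ 1 := by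
  constructor
  · ring_nf
  · have h1 : 0 < θ / 2 := by linarith [hθ.1]
    have h2 : θ / 2 < Real.pi / 2 := by linarith [hθ.2]
    have : 0 < Real.cos (θ / 2) := Real.cos_pos_of_mem_Ioo ⟨by linarith [Real.pi_pos], h2⟩
    intro h
    have : Real.cos (θ / 2) = 0 := by linarith
    linarith
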